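/- Let M(n,A,l) denote the number of Motzkin paths of width n, area A, and last fall length l, with the convention that M(n,A,l) = 0 whenever n < 0, A < 0, l < 0 or A > n², and base case M(0,0,0) = 1. Then for all n ≥ 1, all A ≥ 0 and all l ≥ 0, the recurrence M(n,A,l) = Σ_{l' ≥ l} M(n−1, A−l, l') + Σ_{l' ≥ l−1} M(n−2, A−(2l−1), l') holds (where the second sum is absent, i.e. zero, when l = 0, since then A−(2l−1) would require area increase; equivalently, terms with a negative argument are zero). -/

import Mathlib

/-- Moves of a Motzkin path: Up-right, Horizontal-right, Down-right. -/
inductive Move : Type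
  | U : Move
  | H : Move
  | D : Move
deriving DecidableEq

open Move

/-- The vertical step of a move. -/
def Move.step : Move → ℤ
  | U => 1
  | H => 0
  | D => -1

/-- The height of a path after its first `i` moves. -/
def heightAt (mz : List Move) (i : ℕ) : ℤ :=
  ((mz.take i).map Move.step).sum

/-- A word over {U,H,D} is a Motzkin path if it never goes below the x-axis
and ends on the x-axis. -/
def IsMotzkin (mz : List Move) : Prop :=
  (∀ i, 0 ≤ heightAt mz i) ∧ heightAt mz mz.length = 0

/-- The area between the x-axis and the path (sum of heights at integer points). -/
def area (mz : List Move) : ℤ :=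
  ∑ i ∈ Finset.range (mz.length + 1), heightAt mz i

/-- `MZ n A` is the set of Motzkin paths of width `n` and area `A`. -/
def MZ (n A : ℕ) : Set (List Move) :=
  {mz | mz.length = n ∧ IsMotzkin mz ∧ area mz = A}

/-- The weight `ω_i` of the `i`-th move (0-indexed): it is `h_i` for U and D moves
(height after the move for U, before the move for D) and `2h_i + 1` for H moves. -/
def moveWeight (mz : List Move) (i : ℕ) : ℤ :=
  match mz[i]? with
  | some U => heightAt mz (i + 1)
  | some D => heightAt mz i
  | some H => 2 * heightAt mz i + 1
  | none => 1

/-- The weight `ω(mz)` of a Motzkin path. -/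
def weight (mz : List Move) : ℤ :=
  ∏ i ∈ Finset.range mz.length, moveWeight mz i

/-- The total displacement `D(π) = Σ_i |i - π(i)|` of a permutation. -/
def totalDisp {n : ℕ} (π : Equiv.Perm (Fin n)) : ℤ :=
  ∑ i : Fin n, |((π i : ℕ) : ℤ) - ((i : ℕ) : ℤ)|

/-- The word over {U,H,D} associated to a permutation. -/
def toPath {n : ℕ} (π : Equiv.Perm (Fin n)) : List Move :=
  (List.finRange n).map fun i : Fin n =>
    if (i : ℕ) < (π i : ℕ) ∧ (i : ℕ) < (π.symm i : ℕ) then U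
    else if (π i : ℕ) < (i : ℕ) ∧ (π.symm i : ℕ) < (i : ℕ) then D
    else H

/-- The last fall length: the length of the maximal suffix consisting of D moves. -/
def lastFall (mz : List Move) : ℕ :=
  (mz.reverse.takeWhile (fun m => decide (m = D))).length

/-- The maximum height of a path. -/
def maxHeight (mz : List Move) : ℕ :=
  (Finset.range (mz.length + 1)).sup fun i => (heightAt mz i).toNat

/-- `flatsAt mz k` is the number of H moves of `mz` made at height `k`. -/
def flatsAt (mz : List Move) (k : ℕ) : ℕ :=
  ((Finset.range mz.length).filter fun j => mz[j]? = some H ∧ heightAt mz j = (k : ℤ)).card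

/-- `peaksAt mz k` is the number of U moves of `mz` ending at height `k`. -/
def peaksAt (mz : List Move) (k : ℕ) : ℕ :=
  ((Finset.range mz.length).filter fun j => mz[j]? = some U ∧ heightAt mz (j + 1) = (k : ℤ)).card

/-- `downsAt mz k` is the number of D moves of `mz` starting at height `k`. -/
def downsAt (mz : List Move) (k : ℕ) : ℕ :=
  ((Finset.range mz.length).filter fun j => mz[j]? = some D ∧ heightAt mz j = (k : ℤ)).card

/-- A candidate building sequence `(f_0, p_1, f_1, …, p_h, f_h)`, recorded as its
height `h` together with the flat counts `f` and peak counts `p`. -/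
structure BSeq where
  h : ℕ
  f : ℕ → ℕ
  p : ℕ → ℕ

/-- `Sset n A` is the set of building sequences for width `n` and area `A`:
all `p`-entries `p_1, …, p_h` are positive, entries beyond the height are zero, and the
width and area conditions hold. -/
def Sset (n A : ℕ) : Set BSeq :=
  {a | (∀ i, 1 ≤ i → i ≤ a.h → 0 < a.p i) ∧
       a.p 0 = 0 ∧
       (∀ i, a.h < i → a.p i = 0) ∧
       (∀ i, a.h < i → a.f i = 0) ∧
       (∑ i ∈ Finset.range (a.h + 1), a.f i) + 2 * (∑ i ∈ Finset.Icc 1 a.h, a.p i) = n ∧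
       (∑ i ∈ Finset.range (a.h + 1), i * a.f i) +
         (∑ i ∈ Finset.Icc 1 a.h, (2 * i - 1) * a.p i) = A}

/-- `mz` has building sequence `a`. -/
def hasBuildSeq (mz : List Move) (a : BSeq) : Prop :=
  maxHeight mz = a.h ∧ (∀ i, flatsAt mz i = a.f i) ∧ (∀ i, peaksAt mz i = a.p i)

/-- `perm(a) = ∏_{i=0}^h (2i+1)^{f_i} · ∏_{i=1}^h i^{2p_i}`. -/
def permWeight (a : BSeq) : ℕ :=
  (∏ i ∈ Finset.range (a.h + 1), (2 * i + 1) ^ a.f i) *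
    ∏ i ∈ Finset.Icc 1 a.h, i ^ (2 * a.p i)

/-- `m(a)`, the number of Motzkin paths with building sequence `a`. -/
def mcount (a : BSeq) : ℕ :=
  Nat.choose (a.f a.h + a.p a.h - 1) (a.p a.h - 1) *
    (∏ i ∈ Finset.Icc 1 (a.h - 1),
      Nat.choose (a.p (i + 1) + a.f i) (a.f i) *
        Nat.choose (a.p (i + 1) + a.f i + a.p i - 1) (a.p i - 1)) *
    Nat.choose (a.p 1 + a.f 0) (a.f 0)

/-- `M(n,A,l)`: the number of Motzkin paths of width `n`, area `A` and last fall length `l`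
(for negative arguments there are no such paths, so the value is `0`; the value at
`(0,0,0)` is `1`, counting the empty path). -/
noncomputable def Mcount (n A l : ℤ) : ℕ :=
  Nat.card {mz : List Move // (mz.length : ℤ) = n ∧ IsMotzkin mz ∧ area mz = A ∧
    (lastFall mz : ℤ) = l}

/-- `D(n,d,l)`: the sum of the weights of all Motzkin paths of width `n`, area `d` and
last fall length `l`. -/
noncomputable def Dw (n d l : ℤ) : ℤ :=
  ∑ᶠ mz ∈ {mz : List Move | (mz.length : ℤ) = n ∧ IsMotzkin mz ∧ area mz = d ∧
    (lastFall mz : ℤ) = l}, weight mz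

/-- `M(n,A,h,p)`: the number of Motzkin paths of width `n`, area `A`, maximum height `h`,
with exactly `p` U-moves ending at height `h` and no H-moves at height `h`. -/
noncomputable def Mtop (n A h p : ℤ) : ℕ :=
  Nat.card {mz : List Move // (mz.length : ℤ) = n ∧ IsMotzkin mz ∧ area mz = A ∧
    (maxHeight mz : ℤ) = h ∧ (peaksAt mz h.toNat : ℤ) = p ∧ flatsAt mz h.toNat = 0}

/-- `D(n,d,h,p)`: the sum of weights of Motzkin paths of width `n`, area `d`,
maximum height `h`, with exactly `p` U-moves ending at height `h` and no H-moves at height `h`. -/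
noncomputable def Dtop (n d h p : ℤ) : ℤ :=
  ∑ᶠ mz ∈ {mz : List Move | (mz.length : ℤ) = n ∧ IsMotzkin mz ∧ area mz = d ∧
    (maxHeight mz : ℤ) = h ∧ (peaksAt mz h.toNat : ℤ) = p ∧ flatsAt mz h.toNat = 0}, weight mz

/-- The area under the first `i` moves of a path (trapezoid rule; may be a half-integer). -/
def prefixArea (mz : List Move) (i : ℕ) : ℚ :=
  ∑ j ∈ Finset.range i, ((heightAt mz j : ℚ) + (heightAt mz (j + 1) : ℚ)) / 2

instance : Finite Move :=
  Finite.of_injective (fun m : Move => match m with | U => (0:Fin 3) | H => 1 | D => 2)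
    (by intro a b; cases a <;> cases b <;> simp)

-- basic heightAt lemmas
@[simp] lemma heightAt_zero (mz : List Move) : heightAt mz 0 = 0 := rfl

lemma heightAt_of_le (u : List Move) {i : ℕ} (h : u.length ≤ i) :
    heightAt u i = heightAt u u.length := by
  unfold heightAt
  rw [List.take_of_length_le h, List.take_of_length_le le_rfl]

lemma heightAt_append_left (xs ys : List Move) {i : ℕ} (h : i ≤ xs.length) :
    heightAt (xs ++ ys) i = heightAt xs i := by
  unfold heightAt
  rw [List.take_append_of_le_length h]

lemma heightAt_append_right (xs ys : List Move) (j : ℕ) :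
    heightAt (xs ++ ys) (xs.length + j) = heightAt xs xs.length + heightAt ys j := by
  unfold heightAt
  rw [List.take_append, List.map_append, List.sum_append, List.take_of_length_le le_rfl]
  simp only [Nat.add_sub_cancel_left, List.take_of_length_le (Nat.le_add_right xs.length j)]

@[simp] lemma heightAt_replicate_D (k j : ℕ) :
    heightAt (List.replicate k D) j = -(min j k : ℤ) := by
  unfold heightAt
  rw [List.take_replicate, List.map_replicate, List.sum_replicate]
  simp [Move.step]

lemma heightAt_singleton (c : Move) : heightAt [c] 1 = c.step := by
  simp [heightAt]

-- area lemmas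
lemma area_append (xs ys : List Move) :
    area (xs ++ ys) = area xs + area ys + ys.length * heightAt xs xs.length := by
  unfold area
  rw [List.length_append]
  have hsplit : ∑ i ∈ Finset.range (xs.length + ys.length + 1), heightAt (xs ++ ys) i
      = ∑ i ∈ Finset.range xs.length, heightAt (xs ++ ys) i
        + ∑ j ∈ Finset.range (ys.length + 1), heightAt (xs ++ ys) (xs.length + j) := by
    have : xs.length + ys.length + 1 = xs.length + (ys.length + 1) := by ring
    rw [this, Finset.sum_range_add]
  rw [hsplit]
  have h1 : ∑ i ∈ Finset.range xs.length, heightAt (xs ++ ys) i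
      = ∑ i ∈ Finset.range xs.length, heightAt xs i := by
    apply Finset.sum_congr rfl
    intro i hi
    exact heightAt_append_left xs ys (le_of_lt (Finset.mem_range.mp hi))
  have h2 : ∑ j ∈ Finset.range (ys.length + 1), heightAt (xs ++ ys) (xs.length + j)
      = ∑ j ∈ Finset.range (ys.length + 1), (heightAt xs xs.length + heightAt ys j) := by
    apply Finset.sum_congr rfl
    intro j _
    exact heightAt_append_right xs ys j
  rw [h1, h2, Finset.sum_add_distrib, Finset.sum_const, Finset.card_range]
  have h3 : ∑ i ∈ Finset.range (xs.length + 1), heightAt xs i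
      = ∑ i ∈ Finset.range xs.length, heightAt xs i + heightAt xs xs.length :=
    Finset.sum_range_succ _ _
  rw [nsmul_eq_mul]
  push_cast
  linarith [h3]

lemma area_singleton (c : Move) : area [c] = c.step := by
  simp [area, Finset.sum_range_succ, heightAt_singleton]

lemma area_replicate_succ (k : ℕ) :
    area (List.replicate (k + 1) D) = area (List.replicate k D) - (k + 1) := by
  have h : List.replicate (k+1) D = List.replicate k D ++ [D] := by
    rw [← List.replicate_succ']
  rw [h, area_append]
  simp [area_singleton, Move.step]
  ring

-- lastFall lemmas
lemma takeWhile_replicate_append (k : ℕ) (t : List Move) :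
    (List.replicate k D ++ t).takeWhile (fun m => decide (m = D))
      = List.replicate k D ++ t.takeWhile (fun m => decide (m = D)) := by
  induction k with
  | zero => simp
  | succ n ih => simp [List.replicate_succ, List.takeWhile_cons, ih]

lemma lastFall_append_replicate (xs : List Move) (k : ℕ) :
    lastFall (xs ++ List.replicate k D) = lastFall xs + k := by
  unfold lastFall
  rw [List.reverse_append, List.reverse_replicate, takeWhile_replicate_append,
    List.length_append, List.length_replicate]
  ring

lemma lastFall_append_single (xs : List Move) {c : Move} (h : c ≠ D) :
    lastFall (xs ++ [c]) = 0 := by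
  unfold lastFall
  rw [List.reverse_append]
  simp [List.takeWhile_cons, h]

lemma lastFall_le_length (mz : List Move) : lastFall mz ≤ mz.length := by
  unfold lastFall
  calc (mz.reverse.takeWhile _).length ≤ mz.reverse.length :=
        (List.takeWhile_prefix _).length_le
    _ = mz.length := List.length_reverse

lemma lastFall_decomp (mz : List Move) :
    mz = mz.take (mz.length - lastFall mz) ++ List.replicate (lastFall mz) D := by
  have hrev : mz.reverse = mz.reverse.takeWhile (fun m => decide (m = D))
      ++ mz.reverse.dropWhile (fun m => decide (m = D)) :=
    List.takeWhile_append_dropWhile.symm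
  have htw : mz.reverse.takeWhile (fun m => decide (m = D))
      = List.replicate (lastFall mz) D := by
    have : ∀ b ∈ mz.reverse.takeWhile (fun m => decide (m = D)), b = D := by
      intro b hb
      have := List.mem_takeWhile_imp hb
      simpa using this
    exact List.eq_replicate_of_mem this
  have hmz : mz = (mz.reverse.dropWhile (fun m => decide (m = D))).reverse
      ++ List.replicate (lastFall mz) D := by
    conv_lhs => rw [← List.reverse_reverse mz]
    conv_lhs => rw [hrev]
    rw [List.reverse_append, htw, List.reverse_replicate]
  have hlen : (mz.reverse.dropWhile (fun m => decide (m = D))).reverse.length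
      = mz.length - lastFall mz := by
    have := congrArg List.length hmz
    simp only [List.length_append, List.length_replicate, List.length_reverse] at this ⊢
    omega
  set u := (mz.reverse.dropWhile (fun m => decide (m = D))).reverse with hu
  have htake : mz.take (mz.length - lastFall mz) = u := by
    rw [← hlen]
    conv_lhs => rw [hmz]
    exact List.take_left
  rw [htake]
  exact hmz

lemma drop_eq_replicate_of_le_lastFall {mz : List Move} {k : ℕ} (h : k ≤ lastFall mz) :
    mz.drop (mz.length - k) = List.replicate k D := by
  set l := lastFall mz with hl
  have hle : l ≤ mz.length := lastFall_le_length mz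
  have hd := lastFall_decomp mz
  rw [← hl] at hd
  set t := mz.take (mz.length - l) with ht
  have hlen : t.length = mz.length - l := by
    rw [ht, List.length_take]; omega
  have hk : k ≤ l := h
  have hn : mz.length - k = t.length + (l - k) := by omega
  rw [hn]
  conv_lhs => rw [hd]
  rw [List.drop_length_add_append, List.drop_replicate]
  congr 1
  omega

lemma decomp_at {mz : List Move} {l : ℕ} (hl : lastFall mz = l) (hlt : l < mz.length) :
    ∃ c : Move, c ≠ D ∧ mz[mz.length - l - 1]? = some c ∧
      mz = mz.take (mz.length - l - 1) ++ c :: List.replicate l D := by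
  have hp : mz.length - l - 1 < mz.length := by omega
  refine ⟨mz[mz.length - l - 1], ?_, ?_, ?_⟩
  case refine_2 => exact List.getElem?_eq_getElem hp
  case refine_3 =>
    conv_lhs => rw [← List.take_append_drop (mz.length - l - 1) mz]
    congr 1
    rw [List.drop_eq_getElem_cons hp]
    congr 1
    have : mz.length - l - 1 + 1 = mz.length - l := by omega
    rw [this, drop_eq_replicate_of_le_lastFall (le_of_eq hl.symm)]
  · -- c ≠ D
    intro hc
    have hdec : mz = mz.take (mz.length - l - 1) ++ List.replicate (l + 1) D := by
      conv_lhs => rw [← List.take_append_drop (mz.length - l - 1) mz]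
      congr 1
      rw [List.drop_eq_getElem_cons hp, hc]
      have : mz.length - l - 1 + 1 = mz.length - l := by omega
      rw [this, drop_eq_replicate_of_le_lastFall (le_of_eq hl.symm), ← List.replicate_succ]
    have := lastFall_append_replicate (mz.take (mz.length - l - 1)) (l + 1)
    rw [← hdec, hl] at this
    omega

def Nonneg (u : List Move) : Prop := ∀ i, 0 ≤ heightAt u i

lemma nonneg_append_left {u v : List Move} (h : Nonneg (u ++ v)) : Nonneg u := by
  intro i
  rcases le_or_gt i u.length with hi | hi
  · rw [← heightAt_append_left u v hi]; exact h i
  · rw [heightAt_of_le u hi.le, ← heightAt_append_left u v le_rfl]; exact h u.length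

lemma motzkin_append_replicate (u : List Move) (l : ℕ) :
    IsMotzkin (u ++ List.replicate l D) ↔
      Nonneg u ∧ heightAt u u.length = l := by
  constructor
  · rintro ⟨h1, h2⟩
    have := heightAt_append_right u (List.replicate l D) l
    rw [heightAt_replicate_D, min_self] at this
    rw [List.length_append, List.length_replicate] at h2
    rw [this] at h2
    exact ⟨nonneg_append_left h1, by linarith⟩
  · rintro ⟨h1, h2⟩
    constructor
    · intro i
      rcases le_or_gt i u.length with hi | hi
      · rw [heightAt_append_left u _ hi]; exact h1 i
      · have : i = u.length + (i - u.length) := by omega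
        rw [this, heightAt_append_right, heightAt_replicate_D, h2]
        have hm : ((min (i - u.length) l : ℕ) : ℤ) ≤ (l : ℤ) := by
          exact_mod_cast min_le_right _ _
        push_cast at hm
        linarith
    · rw [List.length_append, List.length_replicate, heightAt_append_right,
        heightAt_replicate_D, min_self, h2]
      ring

lemma heightAt_snoc_end (u : List Move) (c : Move) :
    heightAt (u ++ [c]) (u.length + 1) = heightAt u u.length + c.step := by
  have := heightAt_append_right u [c] 1
  rwa [heightAt_singleton] at this

lemma area_snoc (u : List Move) (c : Move) :
    area (u ++ [c]) = area u + c.step + heightAt u u.length := by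
  rw [area_append, area_singleton, List.length_singleton]
  push_cast
  ring

lemma nonneg_snoc {u : List Move} {c : Move} (h : Nonneg u)
    (hc : 0 ≤ heightAt u u.length + c.step) : Nonneg (u ++ [c]) := by
  intro i
  rcases le_or_gt i u.length with hi | hi
  · rw [heightAt_append_left u _ hi]; exact h i
  · rw [heightAt_of_le _ (by simpa using hi), List.length_append, List.length_singleton,
      heightAt_snoc_end]
    exact hc

lemma area_append_rep (u : List Move) (l : ℕ) :
    area (u ++ List.replicate l D)
      = area u + area (List.replicate l D) + l * heightAt u u.length := by
  rw [area_append, List.length_replicate]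

lemma heightAt_last_snoc (u : List Move) (c : Move) :
    heightAt (u ++ [c]) ((u ++ [c]).length) = heightAt u u.length + c.step := by
  rw [List.length_append, List.length_singleton, heightAt_snoc_end]

lemma motzkin_H_iff (u : List Move) (l : ℕ) :
    IsMotzkin (u ++ H :: List.replicate l D) ↔ IsMotzkin (u ++ List.replicate l D) := by
  have h1 : u ++ H :: List.replicate l D = (u ++ [H]) ++ List.replicate l D := by simp
  rw [h1, motzkin_append_replicate, motzkin_append_replicate]
  constructor
  · rintro ⟨hn, hh⟩
    rw [List.length_append, List.length_singleton, heightAt_snoc_end] at hh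
    refine ⟨nonneg_append_left hn, ?_⟩
    simpa [Move.step] using hh
  · rintro ⟨hn, hh⟩
    refine ⟨nonneg_snoc hn (by rw [hh]; simp [Move.step]), ?_⟩
    rw [List.length_append, List.length_singleton, heightAt_snoc_end, hh]
    simp [Move.step]

lemma area_H (u : List Move) (l : ℕ) (hh : heightAt u u.length = l) :
    area (u ++ H :: List.replicate l D) = area (u ++ List.replicate l D) + l := by
  have h1 : u ++ H :: List.replicate l D = (u ++ [H]) ++ List.replicate l D := by simp
  rw [h1, area_append_rep, area_append_rep, area_snoc, heightAt_last_snoc, hh]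
  simp [Move.step]
  ring

lemma motzkin_U_iff (u : List Move) (l : ℕ) :
    IsMotzkin (u ++ U :: List.replicate l D) ↔
      (1 ≤ l ∧ IsMotzkin (u ++ List.replicate (l - 1) D)) := by
  have h1 : u ++ U :: List.replicate l D = (u ++ [U]) ++ List.replicate l D := by simp
  rw [h1, motzkin_append_replicate, motzkin_append_replicate]
  constructor
  · rintro ⟨hn, hh⟩
    rw [List.length_append, List.length_singleton, heightAt_snoc_end] at hh
    have hu : Nonneg u := nonneg_append_left hn
    have h0 : 0 ≤ heightAt u u.length := hu u.length
    have hl : 1 ≤ l := by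
      by_contra h
      have : l = 0 := by omega
      subst this
      simp [Move.step] at hh
      omega
    refine ⟨hl, hu, ?_⟩
    have : ((l - 1 : ℕ) : ℤ) = (l : ℤ) - 1 := by omega
    rw [this]
    simp [Move.step] at hh
    linarith
  · rintro ⟨hl, hn, hh⟩
    have : ((l - 1 : ℕ) : ℤ) = (l : ℤ) - 1 := by omega
    rw [this] at hh
    refine ⟨nonneg_snoc hn (by rw [hh]; simp [Move.step]), ?_⟩
    rw [List.length_append, List.length_singleton, heightAt_snoc_end, hh]
    simp [Move.step]

lemma area_U (u : List Move) (l : ℕ) (hl : 1 ≤ l)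
    (hh : heightAt u u.length = (l : ℤ) - 1) :
    area (u ++ U :: List.replicate l D)
      = area (u ++ List.replicate (l - 1) D) + (2 * l - 1) := by
  have h1 : u ++ U :: List.replicate l D = (u ++ [U]) ++ List.replicate l D := by simp
  have h2 : l = (l - 1) + 1 := by omega
  have h3 : area (List.replicate l D) = area (List.replicate (l - 1) D) - l := by
    conv_lhs => rw [h2]
    rw [area_replicate_succ]
    have : ((l - 1 : ℕ) : ℤ) = (l : ℤ) - 1 := by omega
    rw [this]; ring
  rw [h1, area_append_rep, area_append_rep, area_snoc, heightAt_last_snoc, hh, h3]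
  have h4 : ((l - 1 : ℕ) : ℤ) = (l : ℤ) - 1 := by omega
  rw [h4]
  simp only [Move.step]
  ring

lemma lastFall_cons_replicate (u : List Move) (c : Move) (hc : c ≠ D) (l : ℕ) :
    lastFall (u ++ c :: List.replicate l D) = l := by
  have h1 : u ++ c :: List.replicate l D = (u ++ [c]) ++ List.replicate l D := by simp
  rw [h1, lastFall_append_replicate, lastFall_append_single u hc]
  omega

def FibZ (n A l : ℤ) : Set (List Move) :=
  {mz | (mz.length : ℤ) = n ∧ IsMotzkin mz ∧ area mz = A ∧ (lastFall mz : ℤ) = l}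

def TailZ (n A l : ℤ) : Set (List Move) :=
  {mz | (mz.length : ℤ) = n ∧ IsMotzkin mz ∧ area mz = A ∧ l ≤ (lastFall mz : ℤ)}

lemma finite_lenZ (m : ℤ) : {mz : List Move | (mz.length : ℤ) = m}.Finite :=
  (List.finite_length_eq Move m.toNat).subset (by
    intro mz h
    simp only [Set.mem_setOf_eq] at h ⊢
    omega)

lemma FibZ_finite (n A l : ℤ) : (FibZ n A l).Finite :=
  (finite_lenZ n).subset (fun _ h => h.1)

lemma TailZ_finite (n A l : ℤ) : (TailZ n A l).Finite :=
  (finite_lenZ n).subset (fun _ h => h.1)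

lemma lastFall_lt_length {mz : List Move} (hm : IsMotzkin mz) (hne : mz ≠ []) :
    lastFall mz < mz.length := by
  rcases lt_or_eq_of_le (lastFall_le_length mz) with h | h
  · exact h
  · exfalso
    have hd := lastFall_decomp mz
    rw [h, Nat.sub_self, List.take_zero] at hd
    rw [hd] at hm
    have := (motzkin_append_replicate [] mz.length).mp (by simpa [← h] using hm)
    have h0 : heightAt [] (List.length ([] : List Move)) = 0 := rfl
    rw [h0] at this
    have : mz.length = 0 := by omega
    exact hne (List.length_eq_zero_iff.mp this)

lemma card_XH (n : ℕ) (A : ℤ) (l : ℕ) (hn : 1 ≤ n) :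
    Nat.card {mz | mz ∈ FibZ n A l ∧ mz[mz.length - l - 1]? = some H}
      = Nat.card (TailZ ((n:ℤ) - 1) (A - l) l) := by
  set S : Set (List Move) := {mz | mz ∈ FibZ n A l ∧ mz[mz.length - l - 1]? = some H}
  set T := TailZ ((n:ℤ) - 1) (A - l) l
  set f : List Move → List Move := fun mz => mz.take (mz.length - l - 1) ++ List.replicate l D
  set g : List Move → List Move := fun y => y.take (y.length - l) ++ H :: List.replicate l D
  -- basic facts for members of S
  have memS : ∀ mz ∈ S, mz.length = n ∧ IsMotzkin mz ∧ area mz = A ∧ lastFall mz = l ∧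
      l < n ∧ mz = mz.take (mz.length - l - 1) ++ H :: List.replicate l D := by
    rintro mz ⟨⟨hlen, hmz, harea, hlf⟩, hget⟩
    have hlen' : mz.length = n := by exact_mod_cast hlen
    have hlf' : lastFall mz = l := by exact_mod_cast hlf
    have hne : mz ≠ [] := by
      intro h; rw [h] at hlen'; simp at hlen'; omega
    have hlt : l < n := by
      have := lastFall_lt_length hmz hne; omega
    obtain ⟨c, hc, hcget, hdec⟩ := decomp_at hlf' (by omega)
    rw [hcget] at hget
    injection hget with hget
    subst hget
    exact ⟨hlen', hmz, harea, hlf', hlt, hdec⟩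
  have memT : ∀ y ∈ T, y.length = n - 1 ∧ IsMotzkin y ∧ area y = A - l ∧
      l ≤ lastFall y ∧ y = y.take (y.length - l) ++ List.replicate l D := by
    rintro y ⟨hlen, hmz, harea, hlf⟩
    have hlen' : y.length = n - 1 := by omega
    have hlf' : l ≤ lastFall y := by exact_mod_cast hlf
    refine ⟨hlen', hmz, harea, hlf', ?_⟩
    conv_lhs => rw [← List.take_append_drop (y.length - l) y]
    rw [drop_eq_replicate_of_le_lastFall hlf']
  -- heights
  have hheight : ∀ u : List Move, IsMotzkin (u ++ List.replicate l D) →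
      heightAt u u.length = l := fun u h => ((motzkin_append_replicate u l).mp h).2
  have hmapsf : Set.MapsTo f S T := by
    intro mz hmz
    obtain ⟨hlen, hm, harea, hlf, hlt, hdec⟩ := memS mz hmz
    set u := mz.take (mz.length - l - 1) with hu
    have hulen : u.length = n - l - 1 := by
      rw [hu, List.length_take]; omega
    have hym : IsMotzkin (u ++ List.replicate l D) := by
      rw [← motzkin_H_iff]; rw [← hdec]; exact hm
    have hh : heightAt u u.length = l := hheight u hym
    refine ⟨?_, hym, ?_, ?_⟩
    · show ((u ++ List.replicate l D).length : ℤ) = n - 1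
      rw [List.length_append, List.length_replicate, hulen]
      push_cast; omega
    · show area (u ++ List.replicate l D) = A - l
      have := area_H u l hh
      rw [← hdec, harea] at this
      omega
    · show (l : ℤ) ≤ lastFall (u ++ List.replicate l D)
      rw [lastFall_append_replicate]
      push_cast; omega
  have hmapsg : Set.MapsTo g T S := by
    intro y hy
    obtain ⟨hlen, hm, harea, hlf, hdec⟩ := memT y hy
    set v := y.take (y.length - l) with hv
    have hvlen : v.length = n - 1 - l := by
      rw [hv, List.length_take]; omega
    have hlfn : l ≤ n - 1 := le_trans hlf (by rw [← hlen]; exact lastFall_le_length y)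
    have hym : IsMotzkin (v ++ H :: List.replicate l D) := by
      rw [motzkin_H_iff]; rw [← hdec]; exact hm
    have hh : heightAt v v.length = l := hheight v (by rw [← hdec]; exact hm)
    have hglen : (v ++ H :: List.replicate l D).length = n := by
      simp only [List.length_append, List.length_cons, List.length_replicate]
      omega
    refine ⟨⟨?_, hym, ?_, ?_⟩, ?_⟩
    · show ((v ++ H :: List.replicate l D).length : ℤ) = n
      rw [hglen]
    · show area (v ++ H :: List.replicate l D) = A
      have := area_H v l hh
      rw [← hdec, harea] at this
      omega
    · show (lastFall (v ++ H :: List.replicate l D) : ℤ) = l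
      rw [lastFall_cons_replicate v H (by simp) l]
    · show (v ++ H :: List.replicate l D)[(v ++ H :: List.replicate l D).length - l - 1]? = some H
      rw [hglen]
      have : n - l - 1 = v.length := by omega
      rw [this, List.getElem?_append_right le_rfl]
      simp
  have hgf : ∀ mz ∈ S, g (f mz) = mz := by
    intro mz hmz
    obtain ⟨hlen, hm, harea, hlf, hlt, hdec⟩ := memS mz hmz
    set u := mz.take (mz.length - l - 1) with hu
    show (u ++ List.replicate l D).take ((u ++ List.replicate l D).length - l)
        ++ H :: List.replicate l D = mz
    rw [List.length_append, List.length_replicate, Nat.add_sub_cancel,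
      List.take_left]
    exact hdec.symm
  have hfg : ∀ y ∈ T, f (g y) = y := by
    intro y hy
    obtain ⟨hlen, hm, harea, hlf, hdec⟩ := memT y hy
    set v := y.take (y.length - l) with hv
    show (v ++ H :: List.replicate l D).take ((v ++ H :: List.replicate l D).length - l - 1)
        ++ List.replicate l D = y
    have h1 : (v ++ H :: List.replicate l D).length - l - 1 = v.length := by
      simp only [List.length_append, List.length_cons, List.length_replicate]
      omega
    rw [h1, List.take_left' rfl]
    · exact hdec.symm
  have hbij : Set.BijOn f S T :=
    Set.InvOn.bijOn ⟨fun mz hmz => hgf mz hmz, fun y hy => hfg y hy⟩ hmapsf hmapsg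
  rw [Nat.card_coe_set_eq, Nat.card_coe_set_eq, ← hbij.image_eq,
    Set.ncard_image_of_injOn hbij.injOn]

lemma card_XU (n : ℕ) (A : ℤ) (l : ℕ) (hn : 1 ≤ n) (hl : 1 ≤ l) :
    Nat.card {mz | mz ∈ FibZ n A l ∧ mz[mz.length - l - 1]? = some U}
      = Nat.card (TailZ ((n:ℤ) - 2) (A - (2 * l - 1)) ((l:ℤ) - 1)) := by
  set S : Set (List Move) := {mz | mz ∈ FibZ n A l ∧ mz[mz.length - l - 1]? = some U}
  set T := TailZ ((n:ℤ) - 2) (A - (2 * l - 1)) ((l:ℤ) - 1)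
  set f : List Move → List Move :=
    fun mz => mz.take (mz.length - l - 1) ++ List.replicate (l - 1) D
  set g : List Move → List Move :=
    fun y => y.take (y.length - (l - 1)) ++ U :: List.replicate l D
  have memS : ∀ mz ∈ S, mz.length = n ∧ IsMotzkin mz ∧ area mz = A ∧ lastFall mz = l ∧
      l < n ∧ mz = mz.take (mz.length - l - 1) ++ U :: List.replicate l D := by
    rintro mz ⟨⟨hlen, hmz, harea, hlf⟩, hget⟩
    have hlen' : mz.length = n := by exact_mod_cast hlen
    have hlf' : lastFall mz = l := by exact_mod_cast hlf
    have hne : mz ≠ [] := by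
      intro h; rw [h] at hlen'; simp at hlen'; omega
    have hlt : l < n := by
      have := lastFall_lt_length hmz hne; omega
    obtain ⟨c, hc, hcget, hdec⟩ := decomp_at hlf' (by omega)
    rw [hcget] at hget
    injection hget with hget
    subst hget
    exact ⟨hlen', hmz, harea, hlf', hlt, hdec⟩
  have memT : ∀ y ∈ T, y.length = n - 2 ∧ 2 ≤ n ∧ IsMotzkin y ∧ area y = A - (2 * l - 1) ∧
      l - 1 ≤ lastFall y ∧ y = y.take (y.length - (l - 1)) ++ List.replicate (l - 1) D := by
    rintro y ⟨hlen, hmz, harea, hlf⟩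
    have hn2 : 2 ≤ n := by omega
    have hlen' : y.length = n - 2 := by omega
    have hlf' : l - 1 ≤ lastFall y := by omega
    refine ⟨hlen', hn2, hmz, harea, hlf', ?_⟩
    conv_lhs => rw [← List.take_append_drop (y.length - (l - 1)) y]
    rw [drop_eq_replicate_of_le_lastFall hlf']
  have hheight : ∀ u : List Move, IsMotzkin (u ++ List.replicate (l - 1) D) →
      heightAt u u.length = (l : ℤ) - 1 := by
    intro u h
    have := ((motzkin_append_replicate u (l - 1)).mp h).2
    rw [this]; omega
  have hmapsf : Set.MapsTo f S T := by
    intro mz hmz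
    obtain ⟨hlen, hm, harea, hlf, hlt, hdec⟩ := memS mz hmz
    set u := mz.take (mz.length - l - 1) with hu
    have hulen : u.length = n - l - 1 := by
      rw [hu, List.length_take]; omega
    have hym : IsMotzkin (u ++ List.replicate (l - 1) D) := by
      have := (motzkin_U_iff u l).mp (by rw [← hdec]; exact hm)
      exact this.2
    have hh : heightAt u u.length = (l : ℤ) - 1 := hheight u hym
    refine ⟨?_, hym, ?_, ?_⟩
    · show ((u ++ List.replicate (l - 1) D).length : ℤ) = n - 2
      rw [List.length_append, List.length_replicate, hulen]
      push_cast [hlt, hl]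
      omega
    · show area (u ++ List.replicate (l - 1) D) = A - (2 * l - 1)
      have := area_U u l hl hh
      rw [← hdec, harea] at this
      omega
    · show ((l : ℤ) - 1) ≤ lastFall (u ++ List.replicate (l - 1) D)
      rw [lastFall_append_replicate]
      push_cast
      omega
  have hmapsg : Set.MapsTo g T S := by
    intro y hy
    obtain ⟨hlen, hn2, hm, harea, hlf, hdec⟩ := memT y hy
    set v := y.take (y.length - (l - 1)) with hv
    have hlfy : lastFall y ≤ y.length := lastFall_le_length y
    have hln : l ≤ n - 1 := by omega
    have hvlen : v.length = n - 1 - l := by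
      rw [hv, List.length_take]; omega
    have hym : IsMotzkin (v ++ U :: List.replicate l D) := by
      rw [motzkin_U_iff]
      exact ⟨hl, by rw [← hdec]; exact hm⟩
    have hh : heightAt v v.length = (l : ℤ) - 1 := hheight v (by rw [← hdec]; exact hm)
    have hglen : (v ++ U :: List.replicate l D).length = n := by
      simp only [List.length_append, List.length_cons, List.length_replicate]
      omega
    refine ⟨⟨?_, hym, ?_, ?_⟩, ?_⟩
    · show ((v ++ U :: List.replicate l D).length : ℤ) = n
      rw [hglen]
    · show area (v ++ U :: List.replicate l D) = A
      have := area_U v l hl hh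
      rw [← hdec, harea] at this
      omega
    · show (lastFall (v ++ U :: List.replicate l D) : ℤ) = l
      rw [lastFall_cons_replicate v U (by simp) l]
    · show (v ++ U :: List.replicate l D)[(v ++ U :: List.replicate l D).length - l - 1]?
        = some U
      rw [hglen]
      have : n - l - 1 = v.length := by omega
      rw [this, List.getElem?_append_right le_rfl]
      simp
  have hgf : ∀ mz ∈ S, g (f mz) = mz := by
    intro mz hmz
    obtain ⟨hlen, hm, harea, hlf, hlt, hdec⟩ := memS mz hmz
    set u := mz.take (mz.length - l - 1) with hu
    show (u ++ List.replicate (l - 1) D).take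
          ((u ++ List.replicate (l - 1) D).length - (l - 1))
        ++ U :: List.replicate l D = mz
    rw [List.length_append, List.length_replicate, Nat.add_sub_cancel, List.take_left]
    exact hdec.symm
  have hfg : ∀ y ∈ T, f (g y) = y := by
    intro y hy
    obtain ⟨hlen, hn2, hm, harea, hlf, hdec⟩ := memT y hy
    set v := y.take (y.length - (l - 1)) with hv
    show (v ++ U :: List.replicate l D).take ((v ++ U :: List.replicate l D).length - l - 1)
        ++ List.replicate (l - 1) D = y
    have h1 : (v ++ U :: List.replicate l D).length - l - 1 = v.length := by
      simp only [List.length_append, List.length_cons, List.length_replicate]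
      omega
    rw [h1, List.take_left' rfl]
    exact hdec.symm
  have hbij : Set.BijOn f S T :=
    Set.InvOn.bijOn ⟨fun mz hmz => hgf mz hmz, fun y hy => hfg y hy⟩ hmapsf hmapsg
  rw [Nat.card_coe_set_eq, Nat.card_coe_set_eq, ← hbij.image_eq,
    Set.ncard_image_of_injOn hbij.injOn]

lemma fib_cover (n : ℕ) (A : ℤ) (l : ℕ) (hn : 1 ≤ n) :
    FibZ n A l = {mz | mz ∈ FibZ n A l ∧ mz[mz.length - l - 1]? = some H}
      ∪ {mz | mz ∈ FibZ n A l ∧ mz[mz.length - l - 1]? = some U} := by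
  ext mz
  constructor
  · intro hmz
    obtain ⟨hlen, hm, harea, hlf⟩ := hmz
    have hlen' : mz.length = n := by exact_mod_cast hlen
    have hlf' : lastFall mz = l := by exact_mod_cast hlf
    have hne : mz ≠ [] := by
      intro h; rw [h] at hlen'; simp at hlen'; omega
    have hlt : l < n := by
      have := lastFall_lt_length hm hne; omega
    obtain ⟨c, hc, hcget, _⟩ := decomp_at hlf' (by omega)
    cases c with
    | U => right; exact ⟨⟨hlen, hm, harea, hlf⟩, hcget⟩
    | H => left; exact ⟨⟨hlen, hm, harea, hlf⟩, hcget⟩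
    | D => exact absurd rfl hc
  · rintro (⟨h, _⟩ | ⟨h, _⟩) <;> exact h

lemma card_fib_split (n : ℕ) (A : ℤ) (l : ℕ) (hn : 1 ≤ n) :
    Nat.card (FibZ n A l) =
      Nat.card {mz | mz ∈ FibZ n A l ∧ mz[mz.length - l - 1]? = some H}
      + Nat.card {mz | mz ∈ FibZ n A l ∧ mz[mz.length - l - 1]? = some U} := by
  have hdisj : Disjoint {mz | mz ∈ FibZ (n:ℤ) A l ∧ mz[mz.length - l - 1]? = some H}
      {mz | mz ∈ FibZ (n:ℤ) A l ∧ mz[mz.length - l - 1]? = some U} := by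
    rw [Set.disjoint_left]
    rintro mz ⟨_, h1⟩ ⟨_, h2⟩
    rw [h1] at h2
    injection h2 with h2
    exact Move.noConfusion h2
  have hfin1 : {mz | mz ∈ FibZ (n:ℤ) A l ∧ mz[mz.length - l - 1]? = some H}.Finite :=
    (FibZ_finite n A l).subset (fun _ h => h.1)
  have hfin2 : {mz | mz ∈ FibZ (n:ℤ) A l ∧ mz[mz.length - l - 1]? = some U}.Finite :=
    (FibZ_finite n A l).subset (fun _ h => h.1)
  rw [Nat.card_coe_set_eq, Nat.card_coe_set_eq, Nat.card_coe_set_eq]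
  nth_rewrite 1 [fib_cover n A l hn]
  exact Set.ncard_union_eq hdisj hfin1 hfin2

lemma XU_empty (n : ℕ) (A : ℤ) (hn : 1 ≤ n) :
    {mz | mz ∈ FibZ n A (0:ℕ) ∧ mz[mz.length - 0 - 1]? = some U} = ∅ := by
  ext mz
  simp only [Set.mem_empty_iff_false, iff_false, Set.mem_setOf_eq, not_and]
  rintro ⟨hlen, hm, harea, hlf⟩ hget
  have hlen' : mz.length = n := by exact_mod_cast hlen
  have hlf' : lastFall mz = 0 := by exact_mod_cast hlf
  have hne : mz ≠ [] := by
    intro h; rw [h] at hlen'; simp at hlen'; omega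
  have hlt : (0:ℕ) < n := hn
  obtain ⟨c, hc, hcget, hdec⟩ := decomp_at hlf' (by omega)
  rw [hcget] at hget
  injection hget with hget
  subst hget
  have := (motzkin_U_iff (mz.take (mz.length - 0 - 1)) 0).mp (by rw [← hdec]; exact hm)
  omega

lemma finsum_tail (m A l : ℤ) :
    ∑ᶠ l' ∈ {l' : ℤ | l ≤ l'}, Mcount m A l' = Nat.card (TailZ m A l) := by
  have hMc : ∀ l' : ℤ, Mcount m A l' = Nat.card (FibZ m A l') := fun _ => rfl
  have hbound : ∀ l' : ℤ, Mcount m A l' ≠ 0 → l' ≤ m := by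
    intro l' h
    rw [hMc] at h
    obtain ⟨⟨mz, hlen, _, _, hlf⟩, _⟩ := Nat.card_ne_zero.mp h
    have := lastFall_le_length mz
    omega
  have hsup : {l' : ℤ | l ≤ l'} ∩ Function.support (fun l' => Mcount m A l')
      = ↑(Finset.Icc l m) ∩ Function.support (fun l' => Mcount m A l') := by
    ext l'
    simp only [Set.mem_inter_iff, Set.mem_setOf_eq, Finset.coe_Icc, Set.mem_Icc,
      Function.mem_support]
    constructor
    · rintro ⟨h1, h2⟩; exact ⟨⟨h1, hbound l' h2⟩, h2⟩
    · rintro ⟨⟨h1, _⟩, h2⟩; exact ⟨h1, h2⟩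
  rw [finsum_mem_eq_sum_of_inter_support_eq _ hsup]
  -- now a finite sum over Icc
  have htf : (TailZ_finite m A l).toFinset
      = (Finset.Icc l m).biUnion (fun l' => (FibZ_finite m A l').toFinset) := by
    ext mz
    simp only [Set.Finite.mem_toFinset, Finset.mem_biUnion, Finset.mem_Icc]
    constructor
    · rintro ⟨hlen, hm', harea, hlf⟩
      refine ⟨lastFall mz, ⟨hlf, ?_⟩, hlen, hm', harea, rfl⟩
      have := lastFall_le_length mz
      omega
    · rintro ⟨l', ⟨h1, _⟩, hlen, hm', harea, hlf⟩
      exact ⟨hlen, hm', harea, by omega⟩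
  have hdisj : ∀ x ∈ Finset.Icc l m, ∀ y ∈ Finset.Icc l m, x ≠ y →
      Disjoint ((FibZ_finite m A x).toFinset) ((FibZ_finite m A y).toFinset) := by
    intro x _ y _ hxy
    rw [Finset.disjoint_left]
    intro mz h1 h2
    simp only [Set.Finite.mem_toFinset] at h1 h2
    exact hxy (h1.2.2.2 ▸ h2.2.2.2 ▸ rfl)
  rw [Nat.card_coe_set_eq, Set.ncard_eq_toFinset_card _ (TailZ_finite m A l), htf,
    Finset.card_biUnion hdisj]
  apply Finset.sum_congr rfl
  intro l' _
  rw [hMc, Nat.card_coe_set_eq, Set.ncard_eq_toFinset_card _ (FibZ_finite m A l')]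


/-- the last-fall recurrence
`M(n,A,l) = Σ_{l' ≥ l} M(n-1, A-l, l') + Σ_{l' ≥ l-1} M(n-2, A-(2l-1), l')`,
where the second sum is absent (zero) when `l = 0`. -/
theorem motzkin_last_fall_recurrence (n A l : ℤ) (hn : 1 ≤ n) (hA : 0 ≤ A) (hl : 0 ≤ l) :
    Mcount n A l =
      (∑ᶠ l' ∈ {l' : ℤ | l ≤ l'}, Mcount (n - 1) (A - l) l') +
      (if l = 0 then 0
       else ∑ᶠ l' ∈ {l' : ℤ | l - 1 ≤ l'}, Mcount (n - 2) (A - (2 * l - 1)) l') := by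
  obtain ⟨N, rfl⟩ : ∃ N : ℕ, n = (N : ℤ) := ⟨n.toNat, by omega⟩
  obtain ⟨L, rfl⟩ : ∃ L : ℕ, l = (L : ℤ) := ⟨l.toNat, by omega⟩
  have hN : 1 ≤ N := by exact_mod_cast hn
  have h0 : Mcount (N : ℤ) A (L : ℤ) = Nat.card (FibZ N A L) := rfl
  rw [h0, card_fib_split N A L hN, card_XH N A L hN, finsum_tail, finsum_tail]
  by_cases hL : L = 0
  · subst hL
    rw [if_pos (by norm_num)]
    have hne : ∀ mz : List Move, ¬ (mz ∈ FibZ (N:ℤ) A 0 ∧ mz[mz.length - 1]? = some U) := by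
      intro mz hmz
      have he := XU_empty N A hN
      have hm : mz ∈ ({mz | mz ∈ FibZ (N:ℤ) A ((0:ℕ):ℤ) ∧ mz[mz.length - 0 - 1]? = some U} :
          Set (List Move)) := ⟨hmz.1, hmz.2⟩
      rw [he] at hm
      exact hm
    congr 1
    rw [Nat.card_eq_zero]
    exact Or.inl ⟨fun x => hne x x.2⟩
  · rw [if_neg (by exact_mod_cast hL), card_XU N A L hN (by omega)]
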